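/- Rodrigues formula for associated conformable Laguerre polynomials: for α ∈ (0,1] and m, n ∈ ℕ, (x^{−mα} e^{x^α/α} / (α^n n!)) · T_α^n [x^{(n+m)α} e^{−x^α/α}] = Σ_{r=0}^{n} (−1)^r (n+m)! / (α^r (n−r)! (r+m)! r!) x^{rα} for all x > 0. -/

import Mathlib

open Finset

/-- The conformable derivative of order `α`. -/
noncomputable def cderiv (α : ℝ) (f : ℝ → ℝ) : ℝ → ℝ :=
  fun x => x ^ (1 - α) * deriv f x

open Real
lemma neg_one_pow_sub' {k r : ℕ} (h : r ≤ k) : (-1:ℝ)^(k-r) = (-1)^k * (-1)^r := by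
  have h1 : (-1:ℝ)^(k-r) * (-1)^r = (-1)^k := by
    rw [← pow_add, Nat.sub_add_cancel h]
  rw [← h1, mul_assoc, ← pow_add, ← two_mul, pow_mul, neg_one_sq, one_pow, mul_one]

lemma hasDerivAt_P {α : ℝ} (hα0 : 0 < α) (b : ℕ) {x : ℝ} (hx : 0 < x) :
    HasDerivAt (fun u : ℝ => u ^ ((b:ℝ)*α) * Real.exp (-u^α/α))
      (((b:ℝ)*α) * x ^ ((b:ℝ)*α - 1) * Real.exp (-x^α/α)
        - x ^ ((b:ℝ)*α) * (x^(α-1) * Real.exp (-x^α/α))) x := by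
  have h1 : HasDerivAt (fun u : ℝ => u ^ ((b:ℝ)*α)) (((b:ℝ)*α) * x ^ ((b:ℝ)*α - 1)) x :=
    Real.hasDerivAt_rpow_const (Or.inl hx.ne')
  have h2 : HasDerivAt (fun u : ℝ => -u^α/α) (-(x^(α-1))) x := by
    have h := ((Real.hasDerivAt_rpow_const (p := α) (Or.inl hx.ne')).fun_neg).div_const α
    refine h.congr_deriv ?_
    field_simp
  have h5 := h1.fun_mul h2.exp
  refine h5.congr_deriv ?_
  ring

lemma rpow_step {α : ℝ} (b : ℕ) (hb : 1 ≤ b) {x : ℝ} (hx : 0 < x) :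
    x ^ (1-α) * (((b:ℝ)*α) * x ^ ((b:ℝ)*α - 1) * Real.exp (-x^α/α)
        - x ^ ((b:ℝ)*α) * (x^(α-1) * Real.exp (-x^α/α)))
      = ((b:ℝ)*α) * (x ^ (((b-1:ℕ):ℝ)*α) * Real.exp (-x^α/α))
        - x ^ ((b:ℝ)*α) * Real.exp (-x^α/α) := by
  have hb' : ((b-1:ℕ):ℝ) = (b:ℝ) - 1 := by
    push_cast [Nat.cast_sub hb]; ring
  rw [hb']
  have e1 : x ^ (1-α) * x ^ ((b:ℝ)*α - 1) = x ^ (((b:ℝ)-1)*α) := by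
    rw [← Real.rpow_add hx]; ring_nf
  have e2 : x ^ (1-α) * (x ^ ((b:ℝ)*α) * x ^ (α-1)) = x ^ ((b:ℝ)*α) := by
    rw [← Real.rpow_add hx, ← Real.rpow_add hx]; ring_nf
  calc x ^ (1-α) * ((b:ℝ)*α * x ^ ((b:ℝ)*α - 1) * Real.exp (-x^α/α)
          - x ^ ((b:ℝ)*α) * (x^(α-1) * Real.exp (-x^α/α)))
      = (b:ℝ)*α * ((x ^ (1-α) * x ^ ((b:ℝ)*α - 1)) * Real.exp (-x^α/α))
        - (x ^ (1-α) * (x ^ ((b:ℝ)*α) * x^(α-1))) * Real.exp (-x^α/α) := by ring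
    _ = _ := by rw [e1, e2]

lemma sum_step (k : ℕ) (c c' : ℕ → ℝ) (P : ℕ → ℝ) (γ : ℕ → ℝ)
    (h0 : c' 0 = - c 0)
    (hsucc : ∀ i, i ≤ k → c i * γ i - c (i+1) = c' (i+1))
    (htop : c (k+1) = 0) :
    ∑ r ∈ range (k+1), (c r * γ r * P (r+1) - c r * P r)
      = ∑ r ∈ range (k+2), c' r * P r := by
  rw [Finset.sum_sub_distrib]
  rw [Finset.sum_range_succ' (fun i => c i * P i) k]
  rw [Finset.sum_range_succ' (fun i => c' i * P i) (k+1)]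
  have hB : ∑ i ∈ range k, c (i+1) * P (i+1)
      = ∑ i ∈ range (k+1), c (i+1) * P (i+1) := by
    rw [Finset.sum_range_succ, htop, zero_mul, add_zero]
  rw [hB, h0]
  have hmain : ∑ r ∈ range (k+1), c r * γ r * P (r+1)
      - ∑ i ∈ range (k+1), c (i+1) * P (i+1)
      = ∑ i ∈ range (k+1), c' (i+1) * P (i+1) := by
    rw [← Finset.sum_sub_distrib]
    refine Finset.sum_congr rfl fun i hi => ?_
    have := hsucc i (Nat.lt_succ_iff.mp (Finset.mem_range.mp hi))
    rw [← this]; ring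
  rw [← hmain]; ring

lemma iterate_formula {α : ℝ} (hα0 : 0 < α) (n m : ℕ) (k : ℕ) :
    k ≤ n → ∀ x > 0,
      ((cderiv α)^[k] (fun u : ℝ => u ^ (((n+m:ℕ):ℝ) * α) * Real.exp (-u^α/α))) x
        = ∑ r ∈ range (k+1),
            ((-1:ℝ)^k * (-1:ℝ)^r * (k.choose r) * α^r * ((n+m).descFactorial r)) *
              (x ^ (((n+m-r:ℕ):ℝ)*α) * Real.exp (-x^α/α)) := by
  induction k with
  | zero => intro _ x hx; simp
  | succ k ih =>
    intro hk x hx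
    have hk' : k ≤ n := Nat.le_of_succ_le hk
    set c : ℕ → ℝ := fun r => (-1:ℝ)^k * (-1:ℝ)^r * (k.choose r) * α^r * ((n+m).descFactorial r)
      with hc
    set c' : ℕ → ℝ := fun r =>
        (-1:ℝ)^(k+1) * (-1:ℝ)^r * ((k+1).choose r) * α^r * ((n+m).descFactorial r) with hc'
    set P : ℕ → ℝ := fun r => x ^ (((n+m-r:ℕ):ℝ)*α) * Real.exp (-x^α/α) with hP
    set S : ℝ → ℝ := fun y => ∑ r ∈ range (k+1),
        c r * (y ^ (((n+m-r:ℕ):ℝ)*α) * Real.exp (-y^α/α)) with hS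
    have hev : ((cderiv α)^[k] (fun u : ℝ => u ^ (((n+m:ℕ):ℝ) * α) * Real.exp (-u^α/α)))
        =ᶠ[nhds x] S := by
      filter_upwards [Ioi_mem_nhds hx] with y hy using ih hk' y hy
    have hDS : HasDerivAt S (∑ r ∈ range (k+1), c r *
        ((((n+m-r:ℕ)):ℝ)*α * x ^ (((n+m-r:ℕ):ℝ)*α - 1) * Real.exp (-x^α/α)
          - x ^ (((n+m-r:ℕ):ℝ)*α) * (x^(α-1) * Real.exp (-x^α/α)))) x := by
      apply HasDerivAt.fun_sum
      intro r hr
      exact (hasDerivAt_P hα0 (n+m-r) hx).const_mul (c r)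
    rw [Function.iterate_succ_apply']
    show x ^ (1-α) * deriv _ x = _
    rw [Filter.EventuallyEq.deriv_eq hev, hDS.deriv, Finset.mul_sum]
    have hterm : ∀ r ∈ range (k+1),
        x ^ (1-α) * (c r *
          ((((n+m-r:ℕ)):ℝ)*α * x ^ (((n+m-r:ℕ):ℝ)*α - 1) * Real.exp (-x^α/α)
            - x ^ (((n+m-r:ℕ):ℝ)*α) * (x^(α-1) * Real.exp (-x^α/α))))
        = c r * ((((n+m-r:ℕ)):ℝ)*α) * P (r+1) - c r * P r := by
      intro r hr
      have hr' : r < k+1 := Finset.mem_range.mp hr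
      have hb : 1 ≤ n+m-r := by omega
      have key := rpow_step (α := α) (n+m-r) hb hx
      have hsub : n+m-r-1 = n+m-(r+1) := by omega
      rw [hsub] at key
      rw [mul_left_comm, key]
      simp only [hP]
      ring
    rw [Finset.sum_congr rfl hterm]
    apply sum_step k c c' P (fun r => (((n+m-r:ℕ)):ℝ)*α)
    · simp [hc, hc', pow_succ]
    · intro i hi
      have hd : (((n+m).descFactorial (i+1)) : ℝ)
          = ((n+m-i : ℕ):ℝ) * (((n+m).descFactorial i) : ℝ) := by
        rw [Nat.descFactorial_succ]; push_cast; ring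
      have hch : (((k+1).choose (i+1)) : ℝ) = (k.choose i : ℝ) + (k.choose (i+1) : ℝ) := by
        rw [Nat.choose_succ_succ]; push_cast; ring
      simp only [hc, hc']
      rw [hd, hch]
      ring
    · simp [hc, Nat.choose_succ_self]

/-- Rodrigues formula for the conformable associated Laguerre polynomials. -/
theorem conformable_associated_rodrigues (α : ℝ) (hα0 : 0 < α) (hα1 : α ≤ 1)
    (n m : ℕ) :
    ∀ x > 0,
      x ^ (-(m : ℝ) * α) * Real.exp (x ^ α / α) / (α ^ n * n.factorial)
          * ((cderiv α)^[n] (fun u : ℝ => u ^ ((n + m : ℕ) * α) * Real.exp (-u ^ α / α))) x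
        = ∑ r ∈ range (n + 1),
            (-1 : ℝ) ^ r * ((n + m).factorial : ℝ) /
                (α ^ r * ((n - r).factorial : ℝ) * (((r + m).factorial : ℝ)) * (r.factorial : ℝ))
              * x ^ (r * α) := by
  intro x hx
  have hαne : α ≠ 0 := hα0.ne'
  rw [iterate_formula hα0 n m n le_rfl x hx, Finset.mul_sum]
  conv_lhs => rw [← Finset.sum_range_reflect]
  refine Finset.sum_congr rfl fun s hs => ?_
  have hs' : s ≤ n := Nat.lt_succ_iff.mp (Finset.mem_range.mp hs)
  simp only [Nat.add_sub_cancel]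
  have e1 : n + m - (n - s) = s + m := by omega
  rw [e1, Nat.choose_symm hs', neg_one_pow_sub' hs']
  have hfac1 : ((n.choose s : ℝ)) * (s.factorial : ℝ) * ((n-s).factorial : ℝ)
      = (n.factorial : ℝ) := by
    exact_mod_cast congrArg (Nat.cast (R := ℝ)) (Nat.choose_mul_factorial_mul_factorial hs')
  have hfac2 : (((s+m).factorial : ℝ)) * (((n+m).descFactorial (n-s)) : ℝ)
      = ((n+m).factorial : ℝ) := by
    have h := Nat.factorial_mul_descFactorial (n := n+m) (k := n-s) (by omega)
    rw [e1] at h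
    exact_mod_cast h
  have hexp : Real.exp (x^α/α) * Real.exp (-x^α/α) = 1 := by
    rw [← Real.exp_add]; ring_nf; exact Real.exp_zero
  have hxp : x ^ (-(m:ℝ)*α) * x ^ ((((s+m):ℕ):ℝ)*α) = x ^ ((s:ℝ)*α) := by
    rw [← Real.rpow_add hx]
    congr 1; push_cast; ring
  have hα2 : α^(n-s) * α^s = α^n := by rw [← pow_add, Nat.sub_add_cancel hs']
  have hneg1 : (-1:ℝ)^n * (-1:ℝ)^n = 1 := by
    rw [← pow_add, ← two_mul, pow_mul, neg_one_sq, one_pow]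
  have hd1 : α^n * (n.factorial : ℝ) ≠ 0 := by positivity
  have hd2 : α^s * ((n-s).factorial : ℝ) * (((s+m).factorial : ℝ)) * (s.factorial : ℝ) ≠ 0 := by
    positivity
  have key : ((-1:ℝ)^s * (n.choose s : ℝ) * (((n+m).descFactorial (n-s)) : ℝ)) * α^(n-s)
        / (α^n * (n.factorial : ℝ))
      = (-1:ℝ)^s * ((n+m).factorial : ℝ) /
          (α^s * ((n-s).factorial : ℝ) * (((s+m).factorial : ℝ)) * (s.factorial : ℝ)) := by
    rw [div_eq_div_iff hd1 hd2]
    calc ((-1:ℝ)^s * (n.choose s : ℝ) * (((n+m).descFactorial (n-s)) : ℝ)) * α^(n-s)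
          * (α^s * ((n-s).factorial : ℝ) * (((s+m).factorial : ℝ)) * (s.factorial : ℝ))
        = (-1:ℝ)^s * (α^(n-s) * α^s)
            * ((n.choose s : ℝ) * (s.factorial : ℝ) * ((n-s).factorial : ℝ))
            * ((((s+m).factorial : ℝ)) * (((n+m).descFactorial (n-s)) : ℝ)) := by ring
      _ = _ := by rw [hα2, hfac1, hfac2]; ring
  calc x ^ (-(m:ℝ) * α) * Real.exp (x ^ α / α) / (α ^ n * (n.factorial : ℝ))
        * ((-1:ℝ)^n * ((-1:ℝ)^n * (-1:ℝ)^s) * (n.choose s : ℝ) * α^(n-s)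
            * (((n+m).descFactorial (n-s)) : ℝ)
            * (x ^ ((((s+m):ℕ):ℝ)*α) * Real.exp (-x ^ α / α)))
      = ((-1:ℝ)^n * (-1:ℝ)^n)
          * (((-1:ℝ)^s * (n.choose s : ℝ) * (((n+m).descFactorial (n-s)) : ℝ)) * α^(n-s)
              / (α^n * (n.factorial : ℝ)))
          * ((x ^ (-(m:ℝ)*α) * x ^ ((((s+m):ℕ):ℝ)*α))
              * (Real.exp (x^α/α) * Real.exp (-x^α/α))) := by ring
    _ = 1 * ((-1:ℝ)^s * ((n+m).factorial : ℝ) /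
          (α^s * ((n-s).factorial : ℝ) * (((s+m).factorial : ℝ)) * (s.factorial : ℝ)))
          * (x ^ ((s:ℝ)*α) * 1) := by rw [hneg1, key, hxp, hexp]
    _ = _ := by ring
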